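/- Let d ≥ 2 and ν ≥ 1. Suppose x and y are fixed points of m_d^ν on ℝ/ℤ (m_d = multiplication by d) with dist(x, y) = 1/(d^ν - 1). Then dist(m_d^{ν-1}(x), m_d^{ν-1}(y)) = 1/(d(d^ν-1)) + ℓ/d for some integer ℓ with 1 ≤ ℓ ≤ d - 1. -/

import Mathlib

/-- If `x, y` are fixed points of multiplication by `d^ν` on `ℝ/ℤ`
(`d ≥ 2`, `ν ≥ 1`) with `dist x y = 1/(d^ν - 1)`, then the difference of
`m_d^{ν-1}(x)` and `m_d^{ν-1}(y)` is, up to sign, `1/(d(d^ν - 1)) + ℓ/d` for some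
integer `1 ≤ ℓ ≤ d - 1` (in particular `ℓ ≠ 0`). -/
theorem iterate_dist_form (d : ℕ) (hd : 2 ≤ d) (ν : ℕ) (hν : 1 ≤ ν)
    (x y : AddCircle (1 : ℝ)) (hx : d ^ ν • x = x) (hy : d ^ ν • y = y)
    (hdist : dist x y = 1 / ((d : ℝ) ^ ν - 1)) :
    ∃ ℓ : ℕ, 1 ≤ ℓ ∧ ℓ ≤ d - 1 ∧
      (d ^ (ν - 1) • (x - y) =
          ((1 / ((d : ℝ) * ((d : ℝ) ^ ν - 1)) + (ℓ : ℝ) / d : ℝ) : AddCircle (1 : ℝ)) ∨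
        d ^ (ν - 1) • (y - x) =
          ((1 / ((d : ℝ) * ((d : ℝ) ^ ν - 1)) + (ℓ : ℝ) / d : ℝ) : AddCircle (1 : ℝ))) := by
  have hd2 : (2 : ℝ) ≤ (d : ℝ) := by exact_mod_cast hd
  have hdpos : (0 : ℝ) < (d : ℝ) := by linarith
  have hpow : (2 : ℝ) ≤ (d : ℝ) ^ ν := by
    calc (2 : ℝ) ≤ (d : ℝ) := hd2
    _ = (d : ℝ) ^ 1 := (pow_one _).symm
    _ ≤ (d : ℝ) ^ ν := pow_le_pow_right₀ (by linarith) hν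
  set N : ℝ := (d : ℝ) ^ ν - 1 with hN
  have hNpos : (0 : ℝ) < N := by simp [hN]; linarith
  -- lift x - y to a real representative
  obtain ⟨r, hr⟩ : ∃ r : ℝ, (r : AddCircle (1 : ℝ)) = x - y :=
    Quotient.exists_rep (x - y)
  -- replace r by r - round r
  have hr' : ((r - round r : ℝ) : AddCircle (1 : ℝ)) = x - y := by
    rw [AddCircle.coe_sub, sub_eq_iff_eq_add, hr]
    have : ((round r : ℝ) : AddCircle (1 : ℝ)) = 0 := by
      rw [AddCircle.coe_eq_zero_iff]
      exact ⟨round r, by simp⟩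
    rw [this, add_zero]
  have habs : |r - round r| = 1 / N := by
    have : dist x y = ‖x - y‖ := dist_eq_norm x y
    rw [this, ← hr, UnitAddCircle.norm_eq] at hdist
    exact hdist
  -- the key real identity
  have hkey : (d : ℝ) ^ (ν - 1) * (1 / N) =
      1 / ((d : ℝ) * N) + (1 : ℝ) / d := by
    have hdν : (d : ℝ) ^ ν = (d : ℝ) * (d : ℝ) ^ (ν - 1) := by
      rw [← pow_succ']
      congr 1
      omega
    set P := (d : ℝ) ^ (ν - 1) with hP
    rw [hN, hdν]
    have h1 : (d : ℝ) * P - 1 ≠ 0 := by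
      have : (2:ℝ) ≤ (d:ℝ) * P := by rw [← hdν]; exact hpow
      intro h; nlinarith
    field_simp
    have h1' : (-1 + P * (d : ℝ)) ≠ 0 := by intro h; apply h1; linarith
    ring_nf
    field_simp
    ring
  have hsmul : ∀ s : ℝ, (d ^ (ν - 1) • ((s : ℝ) : AddCircle (1 : ℝ))) =
      (((d : ℝ) ^ (ν - 1) * s : ℝ) : AddCircle (1 : ℝ)) := by
    intro s
    rw [← AddCircle.coe_nsmul, nsmul_eq_mul]
    push_cast
    ring_nf
  refine ⟨1, le_refl 1, by omega, ?_⟩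
  rcases abs_eq (by positivity : (0:ℝ) ≤ 1 / N) |>.mp habs with h | h
  · left
    rw [← hr', h, hsmul, hkey]
    norm_num
  · right
    have : ((1 / N : ℝ) : AddCircle (1 : ℝ)) = y - x := by
      rw [← neg_sub x y, ← hr', h, AddCircle.coe_neg, neg_neg]
    rw [← this, hsmul, hkey]
    norm_num
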